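/- arXiv:2007.06482 — 3 statements merged into one kernel-verified Lean document; each statement's English description precedes it below -/
import Mathlib

section
/- Let A₀ ∈ ℝ^{n×n} be stable with steady-state covariance Σ₀ satisfying Σ₀ = A₀ Σ₀ A₀ᵀ + I. Let c₀ ≥ ‖Σ₀^{1/2} A₀ᵀ‖₂ and let A₁ satisfy ‖Σ₀^{1/2}(A₀ − A₁)ᵀ‖₂ ≤ η c₀ with c₀² η(η+2) < 1. Then A₁ is stable. -/
open Matrix

/-- The spectral norm of a square real matrix, i.e. the operator norm of the induced
linear map on Euclidean space. -/
noncomputable def sNorm {n : ℕ} (A : Matrix (Fin n) (Fin n) ℝ) : ℝ :=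
  ‖Matrix.toEuclideanCLM (𝕜 := ℝ) A‖
open scoped ComplexOrder in
noncomputable def Matrix.PosSemidef.sqrt {𝕜 : Type*} [RCLike 𝕜] {m : Type*} [Fintype m]
    [DecidableEq m] {A : Matrix m m 𝕜} (hA : A.PosSemidef) : Matrix m m 𝕜 :=
  hA.1.eigenvectorUnitary.1 * diagonal ((↑) ∘ (√·) ∘ hA.1.eigenvalues) *
    (star hA.1.eigenvectorUnitary : Matrix m m 𝕜)

open scoped ComplexOrder in
lemma Matrix.PosSemidef.sqrt_mul_self {𝕜 : Type*} [RCLike 𝕜] {m : Type*} [Fintype m]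
    [DecidableEq m] {A : Matrix m m 𝕜} (hA : A.PosSemidef) : hA.sqrt * hA.sqrt = A := by
  conv_rhs => rw [hA.1.spectral_theorem, Unitary.conjStarAlgAut_apply]
  unfold Matrix.PosSemidef.sqrt
  have hu : (star hA.1.eigenvectorUnitary : Matrix m m 𝕜) * hA.1.eigenvectorUnitary.1 = 1 :=
    Unitary.coe_star_mul_self _
  rw [show ∀ a b c d e f : Matrix m m 𝕜, a * b * c * (d * e * f) = a * b * (c * d) * e * f by
    intros; simp only [mul_assoc], hu, mul_one, Matrix.mul_assoc (hA.1.eigenvectorUnitary : Matrix m m 𝕜), diagonal_mul_diagonal]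
  congr 3
  funext i
  simp only [Function.comp_apply]
  rw [← RCLike.ofReal_mul, Real.mul_self_sqrt (hA.eigenvalues_nonneg i)]

open scoped ComplexOrder in
lemma Matrix.PosSemidef.sqrt_isHermitian {𝕜 : Type*} [RCLike 𝕜] {m : Type*} [Fintype m]
    [DecidableEq m] {A : Matrix m m 𝕜} (hA : A.PosSemidef) : hA.sqrt.IsHermitian := by
  unfold Matrix.PosSemidef.sqrt
  rw [IsHermitian, conjTranspose_mul, conjTranspose_mul, diagonal_conjTranspose,
    ← star_eq_conjTranspose, ← star_eq_conjTranspose, star_star, Matrix.mul_assoc]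
  congr 3
  funext i
  simp [RCLike.star_def]

section Aux

variable {n : ℕ}

private noncomputable def eE (x : Fin n → ℝ) : EuclideanSpace ℝ (Fin n) :=
  (WithLp.equiv 2 (Fin n → ℝ)).symm x

private lemma dot_eq_inner (x y : Fin n → ℝ) :
    x ⬝ᵥ y = inner ℝ (eE x) (eE y) := by
  rw [eE, eE]
  rw [EuclideanSpace.inner_toLp_toLp, star_trivial, dotProduct_comm]
  rfl

private lemma dot_self_eq (x : Fin n → ℝ) : x ⬝ᵥ x = ‖eE x‖ ^ 2 := by
  rw [dot_eq_inner, real_inner_self_eq_norm_sq]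

private lemma dot_self_nonneg (x : Fin n → ℝ) : 0 ≤ x ⬝ᵥ x := by
  rw [dot_self_eq]; positivity

private lemma dot_self_pos {x : Fin n → ℝ} (hx : x ≠ 0) : 0 < x ⬝ᵥ x := by
  rw [dot_self_eq]
  have h0 : eE x ≠ 0 := by
    simp only [eE]
    intro h
    exact hx (by simpa using congrArg (WithLp.equiv 2 (Fin n → ℝ)) h)
  exact pow_pos (norm_pos_iff.mpr h0) 2

private lemma mulVec_norm_le (M : Matrix (Fin n) (Fin n) ℝ) (x : Fin n → ℝ) :
    ‖eE (M *ᵥ x)‖ ≤ sNorm M * ‖eE x‖ := by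
  have h := (Matrix.toEuclideanCLM (𝕜 := ℝ) M).le_opNorm (eE x)
  have h2 : Matrix.toEuclideanCLM (𝕜 := ℝ) M (eE x) = eE (M *ᵥ x) := by
    rw [eE, eE]; rfl
  rw [h2] at h
  exact h

private lemma sNorm_nonneg (M : Matrix (Fin n) (Fin n) ℝ) : 0 ≤ sNorm M :=
  norm_nonneg _

private lemma dot_abs_le (x y : Fin n → ℝ) : |x ⬝ᵥ y| ≤ ‖eE x‖ * ‖eE y‖ := by
  rw [dot_eq_inner]
  exact abs_real_inner_le_norm _ _

end Aux

set_option maxHeartbeats 1600000 in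
/-- Perturbation of stability in a Lyapunov metric: if `A₀` is stable with steady-state
covariance `Σ₀ = A₀Σ₀A₀ᵀ + 1`, `c₀ ≥ ‖Σ₀^{1/2}A₀ᵀ‖₂`, and `A₁` satisfies
`‖Σ₀^{1/2}(A₀ − A₁)ᵀ‖₂ ≤ ηc₀` with `c₀²η(η+2) < 1`, then `A₁` is stable. -/
theorem stmt4 {n : ℕ} (A₀ A₁ S₀ : Matrix (Fin n) (Fin n) ℝ)
    (hstab : ∀ μ ∈ spectrum ℂ (A₀.map (algebraMap ℝ ℂ)), ‖μ‖ < 1)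
    (hS₀psd : S₀.PosSemidef)
    (hS₀ : S₀ = A₀ * S₀ * A₀ᵀ + 1)
    (c₀ η : ℝ)
    (hc₀ : sNorm (hS₀psd.sqrt * A₀ᵀ) ≤ c₀)
    (hpert : sNorm (hS₀psd.sqrt * (A₀ - A₁)ᵀ) ≤ η * c₀)
    (hsmall : c₀ ^ 2 * (η * (η + 2)) < 1) :
    ∀ μ ∈ spectrum ℂ (A₁.map (algebraMap ℝ ℂ)), ‖μ‖ < 1 := by
  classical
  set Q : Matrix (Fin n) (Fin n) ℝ := hS₀psd.sqrt with hQdef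
  have hQQ : Q * Q = S₀ := hS₀psd.sqrt_mul_self
  have hQsym : Qᵀ = Q := by
    have := hS₀psd.sqrt_isHermitian
    rwa [Matrix.IsHermitian, Matrix.conjTranspose_eq_transpose_of_trivial] at this
  have hS₀sym : S₀ᵀ = S₀ := by
    have := hS₀psd.isHermitian
    rwa [Matrix.IsHermitian, Matrix.conjTranspose_eq_transpose_of_trivial] at this
  set M : Matrix (Fin n) (Fin n) ℝ := Q * A₀ᵀ with hMdef
  set N : Matrix (Fin n) (Fin n) ℝ := Q * (A₀ - A₁)ᵀ with hNdef
  have hMN : Q * A₁ᵀ = M - N := by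
    rw [hMdef, hNdef, Matrix.transpose_sub, Matrix.mul_sub, sub_sub_cancel]
  -- moving a matrix across the dot product
  have hshift : ∀ (B : Matrix (Fin n) (Fin n) ℝ) (y z : Fin n → ℝ),
      y ⬝ᵥ (B *ᵥ z) = (Bᵀ *ᵥ y) ⬝ᵥ z := by
    intro B y z
    rw [Matrix.dotProduct_mulVec, Matrix.mulVec_transpose]
  -- the S₀-bilinear form
  have gform : ∀ y z : Fin n → ℝ, y ⬝ᵥ (S₀ *ᵥ z) = (Q *ᵥ y) ⬝ᵥ (Q *ᵥ z) := by
    intro y z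
    rw [← hQQ, ← Matrix.mulVec_mulVec, hshift, hQsym]
  -- symmetry of the S₀-form
  have hsym : ∀ a b : Fin n → ℝ, a ⬝ᵥ (S₀ *ᵥ b) = b ⬝ᵥ (S₀ *ᵥ a) := by
    intro a b
    rw [gform, gform, dotProduct_comm]
  -- nonnegativity of c₀ and η * c₀
  have hc₀0 : 0 ≤ c₀ := le_trans (sNorm_nonneg _) hc₀
  have hηc₀0 : 0 ≤ η * c₀ := le_trans (sNorm_nonneg _) hpert
  -- the key quantitative inequality
  have key : ∀ y : Fin n → ℝ,
      (1 - c₀ ^ 2 * (η * (η + 2))) * (y ⬝ᵥ y) ≤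
        y ⬝ᵥ (S₀ *ᵥ y) - (A₁ᵀ *ᵥ y) ⬝ᵥ (S₀ *ᵥ (A₁ᵀ *ᵥ y)) := by
    intro y
    have hq : y ⬝ᵥ (S₀ *ᵥ y) = (M *ᵥ y) ⬝ᵥ (M *ᵥ y) + y ⬝ᵥ y := by
      conv_lhs => rw [hS₀]
      rw [Matrix.add_mulVec, dotProduct_add, Matrix.one_mulVec]
      congr 1
      rw [show (A₀ * S₀ * A₀ᵀ) *ᵥ y = A₀ *ᵥ (S₀ *ᵥ (A₀ᵀ *ᵥ y)) by
        rw [Matrix.mulVec_mulVec, Matrix.mulVec_mulVec]]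
      rw [hshift, gform, Matrix.mulVec_mulVec, ← hMdef]
    have hr : (A₁ᵀ *ᵥ y) ⬝ᵥ (S₀ *ᵥ (A₁ᵀ *ᵥ y)) =
        (M *ᵥ y - N *ᵥ y) ⬝ᵥ (M *ᵥ y - N *ᵥ y) := by
      rw [gform, Matrix.mulVec_mulVec, hMN, Matrix.sub_mulVec]
    rw [hq, hr]
    set u := M *ᵥ y with hu
    set w := N *ᵥ y with hw
    have hexp : (u - w) ⬝ᵥ (u - w) = u ⬝ᵥ u - 2 * (u ⬝ᵥ w) + w ⬝ᵥ w := by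
      rw [sub_dotProduct, dotProduct_sub, dotProduct_sub,
        dotProduct_comm w u]
      ring
    rw [hexp]
    -- bounds
    have hyy : y ⬝ᵥ y = ‖eE y‖ ^ 2 := dot_self_eq y
    have hub : ‖eE u‖ ≤ c₀ * ‖eE y‖ :=
      le_trans (mulVec_norm_le M y) (by nlinarith [norm_nonneg (eE y)])
    have hwb : ‖eE w‖ ≤ (η * c₀) * ‖eE y‖ :=
      le_trans (mulVec_norm_le N y) (by nlinarith [norm_nonneg (eE y)])
    have huw : |u ⬝ᵥ w| ≤ (c₀ * ‖eE y‖) * ((η * c₀) * ‖eE y‖) := by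
      refine le_trans (dot_abs_le u w) ?_
      exact mul_le_mul hub hwb (norm_nonneg _) (by positivity)
    have hww : w ⬝ᵥ w ≤ ((η * c₀) * ‖eE y‖) ^ 2 := by
      rw [dot_self_eq]
      exact pow_le_pow_left₀ (norm_nonneg _) hwb 2
    have habs := abs_le.mp huw
    nlinarith [norm_nonneg (eE y), habs.1, habs.2]
  -- positivity facts
  have hSpos : ∀ y : Fin n → ℝ, 0 ≤ y ⬝ᵥ (S₀ *ᵥ y) := by
    intro y
    rw [gform]
    exact dot_self_nonneg _
  have hSposs : ∀ y : Fin n → ℝ, y ⬝ᵥ y ≤ y ⬝ᵥ (S₀ *ᵥ y) := by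
    intro y
    have hq : y ⬝ᵥ (S₀ *ᵥ y) = (M *ᵥ y) ⬝ᵥ (M *ᵥ y) + y ⬝ᵥ y := by
      conv_lhs => rw [hS₀]
      rw [Matrix.add_mulVec, dotProduct_add, Matrix.one_mulVec]
      congr 1
      rw [show (A₀ * S₀ * A₀ᵀ) *ᵥ y = A₀ *ᵥ (S₀ *ᵥ (A₀ᵀ *ᵥ y)) by
        rw [Matrix.mulVec_mulVec, Matrix.mulVec_mulVec]]
      rw [hshift, gform, Matrix.mulVec_mulVec, ← hMdef]
    rw [hq]
    have := dot_self_nonneg (M *ᵥ y)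
    linarith
  -- now the spectral argument
  intro μ hμ
  rw [spectrum.mem_iff] at hμ
  have hdet : (algebraMap ℂ (Matrix (Fin n) (Fin n) ℂ) μ - A₁.map (algebraMap ℝ ℂ)).det = 0 := by
    by_contra h
    exact hμ ((Matrix.isUnit_iff_isUnit_det _).2 (Ne.isUnit h))
  have hdetT : ((algebraMap ℂ (Matrix (Fin n) (Fin n) ℂ) μ
      - A₁.map (algebraMap ℝ ℂ))ᵀ).det = 0 := by
    rw [Matrix.det_transpose]; exact hdet
  obtain ⟨v, hv0, hv⟩ := (Matrix.exists_mulVec_eq_zero_iff).mpr hdetT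
  -- v is an eigenvector of the transpose
  have heig : (A₁.map (algebraMap ℝ ℂ))ᵀ *ᵥ v = μ • v := by
    have h1 : (algebraMap ℂ (Matrix (Fin n) (Fin n) ℂ) μ
        - A₁.map (algebraMap ℝ ℂ))ᵀ = μ • (1 : Matrix (Fin n) (Fin n) ℂ)
          - (A₁.map (algebraMap ℝ ℂ))ᵀ := by
      rw [Matrix.transpose_sub, Algebra.algebraMap_eq_smul_one, Matrix.transpose_smul,
        Matrix.transpose_one]
    rw [h1, Matrix.sub_mulVec, sub_eq_zero] at hv
    rw [← hv, Matrix.smul_mulVec, Matrix.one_mulVec]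
  set p : ℝ := μ.re with hp
  set q : ℝ := μ.im with hqq
  set a : Fin n → ℝ := fun i => (v i).re with ha
  set b : Fin n → ℝ := fun i => (v i).im with hb
  have hcomp : ∀ i, (∑ j, ((A₁ j i : ℝ) : ℂ) * v j) = μ * v i := by
    intro i
    have := congrFun heig i
    simpa [Matrix.mulVec, dotProduct, Matrix.transpose_apply, Matrix.map_apply,
      Pi.smul_apply, smul_eq_mul, Complex.coe_algebraMap] using this
  have hare : A₁ᵀ *ᵥ a = p • a - q • b := by
    funext i
    have := congrArg Complex.re (hcomp i)
    simp only [Complex.re_sum, Complex.mul_re, Complex.ofReal_re, Complex.ofReal_im,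
      map_sum] at this
    simpa [Matrix.mulVec, dotProduct, Matrix.transpose_apply, ha, hb,
      Complex.re_sum, Complex.mul_re, Complex.ofReal_re, Complex.ofReal_im] using this
  have haim : A₁ᵀ *ᵥ b = q • a + p • b := by
    funext i
    have := congrArg Complex.im (hcomp i)
    simp only [Complex.im_sum, Complex.mul_im, Complex.ofReal_re, Complex.ofReal_im,
      map_sum] at this
    have h2 : (A₁ᵀ *ᵥ b) i = ∑ j, A₁ j i * b j := by
      simp [Matrix.mulVec, dotProduct, Matrix.transpose_apply, hb]
    rw [h2]
    simp only [Pi.add_apply, Pi.smul_apply, smul_eq_mul]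
    calc ∑ j, A₁ j i * b j = ∑ j, ((A₁ j i : ℂ) * v j).im := by
          simp [Complex.mul_im, hb]
      _ = (μ * v i).im := by rw [← Complex.im_sum, hcomp i]
      _ = q * a i + p * b i := by
          simp [Complex.mul_im, ha, hb, hp, hqq]; ring
  -- not both a and b are zero
  have hab : a ≠ 0 ∨ b ≠ 0 := by
    by_contra h
    push_neg at h
    apply hv0
    funext i
    have h1 : a i = 0 := by rw [h.1]; rfl
    have h2 : b i = 0 := by rw [h.2]; rfl
    exact Complex.ext (by simpa [ha] using h1) (by simpa [hb] using h2)
  -- total S₀-energy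
  set t : ℝ := a ⬝ᵥ (S₀ *ᵥ a) + b ⬝ᵥ (S₀ *ᵥ b) with ht
  have htpos : 0 < t := by
    rcases hab with h | h
    · have := dot_self_pos h
      have h1 := hSposs a
      have h2 := hSpos b
      rw [ht]; linarith
    · have := dot_self_pos h
      have h1 := hSposs b
      have h2 := hSpos a
      rw [ht]; linarith
  -- the Lyapunov identity
  have hident : (A₁ᵀ *ᵥ a) ⬝ᵥ (S₀ *ᵥ (A₁ᵀ *ᵥ a)) + (A₁ᵀ *ᵥ b) ⬝ᵥ (S₀ *ᵥ (A₁ᵀ *ᵥ b))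
      = (p ^ 2 + q ^ 2) * t := by
    rw [hare, haim, ht]
    have e1 : S₀ *ᵥ (p • a - q • b) = p • (S₀ *ᵥ a) - q • (S₀ *ᵥ b) := by
      rw [Matrix.mulVec_sub, Matrix.mulVec_smul, Matrix.mulVec_smul]
    have e2 : S₀ *ᵥ (q • a + p • b) = q • (S₀ *ᵥ a) + p • (S₀ *ᵥ b) := by
      rw [Matrix.mulVec_add, Matrix.mulVec_smul, Matrix.mulVec_smul]
    rw [e1, e2]
    simp only [sub_dotProduct, dotProduct_sub, add_dotProduct,
      dotProduct_add, smul_dotProduct, dotProduct_smul,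
      smul_eq_mul]
    have := hsym a b
    nlinarith [hsym a b]
  -- combine
  have hka := key a
  have hkb := key b
  have hsum : (1 - c₀ ^ 2 * (η * (η + 2))) * (a ⬝ᵥ a + b ⬝ᵥ b) ≤ t - (p ^ 2 + q ^ 2) * t := by
    rw [← hident, ht]
    linarith
  have habpos : 0 < a ⬝ᵥ a + b ⬝ᵥ b := by
    rcases hab with h | h
    · have := dot_self_pos h
      have := dot_self_nonneg b
      linarith
    · have := dot_self_pos h
      have := dot_self_nonneg a
      linarith
  have hlt : p ^ 2 + q ^ 2 < 1 := by
    nlinarith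
  have hnorm : ‖μ‖ ^ 2 = p ^ 2 + q ^ 2 := by
    rw [Complex.sq_norm, Complex.normSq_apply, hp, hqq]
    ring
  nlinarith [norm_nonneg μ, hnorm]
end

section
/- For symmetric positive definite matrices X, Y with X ⪰ Y ≻ 0, the ratio of determinants satisfies det(Y)/det(X) ≤ inf over nonzero vectors x of (xᵀYx)/(xᵀXx). In particular, det(Y)/det(X) ≤ (vᵀYv)/(vᵀXv) for any nonzero vector v. -/
open Matrix Finset
open scoped MatrixOrder

lemma aux_rayleigh {m : ℕ} (Z : Matrix (Fin m) (Fin m) ℝ) (hZ : Z.PosDef)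
    (h1 : (1 - Z).PosSemidef) (w : Fin m → ℝ) :
    Z.det * (w ⬝ᵥ w) ≤ w ⬝ᵥ Z.mulVec w := by
  have hHerm := hZ.isHermitian
  set μ := hHerm.eigenvalues with hμ
  have hμpos : ∀ i, 0 < μ i := hZ.eigenvalues_pos
  have hμle : ∀ i, μ i ≤ 1 := by
    intro i
    set u : Fin m → ℝ := ⇑(hHerm.eigenvectorBasis i) with hu
    have hu0 : u ≠ 0 := by
      intro h
      have h2 := hHerm.eigenvectorBasis.orthonormal.1 i
      have : (hHerm.eigenvectorBasis i : EuclideanSpace ℝ (Fin m)) = 0 := by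
        ext j; exact congrFun h j
      rw [this] at h2; simp at h2
    have huu : 0 < u ⬝ᵥ u := by
      have := dotProduct_self_star_pos_iff (v := u) |>.mpr hu0
      simpa using this
    have h2 : 0 ≤ u ⬝ᵥ ((1 - Z).mulVec u) := by simpa using h1.dotProduct_mulVec_nonneg u
    have h3 : (1 - Z).mulVec u = u - μ i • u := by
      rw [sub_mulVec, one_mulVec, hHerm.mulVec_eigenvectorBasis]
    rw [h3] at h2
    have h4 : 0 ≤ (1 - μ i) * (u ⬝ᵥ u) := by
      rw [sub_mul, one_mul]
      simpa [dotProduct_sub, dotProduct_smul, smul_eq_mul] using h2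
    nlinarith
  have hdet : Z.det = ∏ i, μ i := by simpa using hHerm.det_eq_prod_eigenvalues
  have hprod_le : ∀ j, (∏ i, μ i) ≤ μ j := by
    intro j
    rw [← Finset.mul_prod_erase univ μ (mem_univ j)]
    have h1' : (∏ i ∈ univ.erase j, μ i) ≤ 1 :=
      Finset.prod_le_one (fun i _ => (hμpos i).le) (fun i _ => hμle i)
    nlinarith [hμpos j, Finset.prod_pos (fun i (_ : i ∈ univ.erase j) => hμpos i)]
  set U : Matrix (Fin m) (Fin m) ℝ := (hHerm.eigenvectorUnitary : Matrix (Fin m) (Fin m) ℝ) with hU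
  have hUU : U * star U = 1 := (mem_unitaryGroup_iff).mp hHerm.eigenvectorUnitary.2
  set c : Fin m → ℝ := star U *ᵥ w with hc
  have hvmul : w ᵥ* U = c := by
    rw [hc, star_eq_conjTranspose, conjTranspose_eq_transpose_of_trivial, ← vecMul_transpose,
      transpose_transpose]
  have key1 : w ⬝ᵥ Z.mulVec w = ∑ i, μ i * (c i)^2 := by
    conv_lhs => rw [hHerm.spectral_theorem, Unitary.conjStarAlgAut_apply]
    rw [← hU, ← mulVec_mulVec, ← mulVec_mulVec, dotProduct_mulVec, hvmul]
    simp only [dotProduct, mulVec_diagonal, Function.comp, RCLike.ofReal_real_eq_id, id]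
    exact Finset.sum_congr rfl (fun i _ => by ring)
  have key2 : w ⬝ᵥ w = ∑ i, (c i)^2 := by
    have h5 : w ⬝ᵥ ((U * star U).mulVec w) = c ⬝ᵥ c := by
      rw [← mulVec_mulVec, dotProduct_mulVec, hvmul]
    rw [hUU, one_mulVec] at h5
    rw [h5]
    simp [dotProduct, pow_two]
  rw [key1, key2, hdet, Finset.mul_sum]
  apply Finset.sum_le_sum
  intro i _
  exact mul_le_mul_of_nonneg_right (hprod_le i) (sq_nonneg _)

/-- For symmetric positive definite matrices `X, Y` with `X ⪰ Y ≻ 0`, the determinant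
ratio satisfies `det(Y)/det(X) ≤ (xᵀYx)/(xᵀXx)` for every nonzero vector `x`. -/
theorem stmt9 {m : ℕ} (X Y : Matrix (Fin m) (Fin m) ℝ)
    (hX : X.PosDef) (hY : Y.PosDef) (hXY : (X - Y).PosSemidef) :
    ∀ v : Fin m → ℝ, v ≠ 0 →
      Y.det / X.det ≤ (v ⬝ᵥ Y.mulVec v) / (v ⬝ᵥ X.mulVec v) := by
  intro v hv
  set S := CFC.sqrt X with hSdef
  have hS : S.PosSemidef := (CFC.sqrt_nonneg X).posSemidef
  have hSS : S * S = X := CFC.sqrt_mul_sqrt_self X hX.posSemidef.nonneg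
  have hdetX : 0 < X.det := hX.det_pos
  have hdetS : S.det ≠ 0 := by
    intro h
    rw [← hSS, det_mul, h, mul_zero] at hdetX
    exact lt_irrefl 0 hdetX
  have hSunit : IsUnit S.det := isUnit_iff_ne_zero.mpr hdetS
  have hSinv : S⁻¹ * S = 1 := nonsing_inv_mul S hSunit
  have hSinv' : S * S⁻¹ = 1 := mul_nonsing_inv S hSunit
  have hSinvH : (S⁻¹)ᴴ = S⁻¹ := (hS.1.inv).eq
  have hSinvT : (S⁻¹)ᵀ = S⁻¹ := by
    have := hSinvH
    rwa [conjTranspose_eq_transpose_of_trivial] at this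
  have hST : Sᵀ = S := by
    have := hS.1.eq
    rwa [conjTranspose_eq_transpose_of_trivial] at this
  set Z := S⁻¹ * Y * S⁻¹ with hZdef
  -- Z is positive definite
  have hZherm : Z.IsHermitian := by
    have := isHermitian_conjTranspose_mul_mul S⁻¹ hY.1
    rwa [hSinvH] at this
  have hZ : Z.PosDef := by
    refine PosDef.of_dotProduct_mulVec_pos hZherm fun x hx => ?_
    have hy : S⁻¹ *ᵥ x ≠ 0 := by
      intro h
      apply hx
      have : S *ᵥ (S⁻¹ *ᵥ x) = x := by rw [mulVec_mulVec, hSinv', one_mulVec]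
      rw [h, mulVec_zero] at this
      exact this.symm
    have hpos := hY.dotProduct_mulVec_pos hy
    have hcalc : star x ⬝ᵥ Z *ᵥ x = star (S⁻¹ *ᵥ x) ⬝ᵥ Y *ᵥ (S⁻¹ *ᵥ x) := by
      rw [hZdef, ← mulVec_mulVec, ← mulVec_mulVec, dotProduct_mulVec]
      congr 1
      simp only [star_trivial]
      rw [← mulVec_transpose, hSinvT]
    rw [hcalc]
    exact hpos
  -- 1 - Z is positive semidefinite
  have h1 : (1 - Z).PosSemidef := by
    have hid : S⁻¹ * X * S⁻¹ = 1 := by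
      rw [← hSS, show S⁻¹ * (S * S) * S⁻¹ = (S⁻¹ * S) * (S * S⁻¹) by noncomm_ring,
        hSinv, hSinv', one_mul]
    have : 1 - Z = (S⁻¹)ᴴ * (X - Y) * S⁻¹ := by
      rw [hSinvH, hZdef, ← hid]
      noncomm_ring
    rw [this]
    exact hXY.conjTranspose_mul_mul_same S⁻¹
  -- determinant of Z
  have hdetZ : Z.det = Y.det / X.det := by
    have hXdet : X.det = S.det * S.det := by rw [← hSS, det_mul]
    have hSinvdet : (S⁻¹).det = (S.det)⁻¹ := by
      rw [det_nonsing_inv, Ring.inverse_eq_inv]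
    rw [hZdef, det_mul, det_mul, hSinvdet, hXdet]
    field_simp
  -- apply the Rayleigh bound with w = S v
  have key := aux_rayleigh Z hZ h1 (S *ᵥ v)
  have hw1 : (S *ᵥ v) ⬝ᵥ (S *ᵥ v) = v ⬝ᵥ X.mulVec v := by
    rw [dotProduct_mulVec (S *ᵥ v) S v, ← mulVec_transpose, hST, mulVec_mulVec, hSS]
    exact dotProduct_comm _ _
  have hw2 : (S *ᵥ v) ⬝ᵥ Z.mulVec (S *ᵥ v) = v ⬝ᵥ Y.mulVec v := by
    have hZw : Z *ᵥ (S *ᵥ v) = S⁻¹ *ᵥ (Y *ᵥ v) := by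
      have hin : S⁻¹ *ᵥ (S *ᵥ v) = v := by rw [mulVec_mulVec, hSinv, one_mulVec]
      rw [hZdef, ← mulVec_mulVec, ← mulVec_mulVec, hin]
    rw [hZw, dotProduct_mulVec (S *ᵥ v) S⁻¹ (Y *ᵥ v), ← mulVec_transpose, hSinvT,
      mulVec_mulVec, hSinv, one_mulVec]
  rw [hw1, hw2, hdetZ] at key
  have hvXv : 0 < v ⬝ᵥ X.mulVec v := by
    have := hX.dotProduct_mulVec_pos hv
    simpa using this
  rw [div_le_div_iff₀ hdetX hvXv]
  calc Y.det * (v ⬝ᵥ X.mulVec v) = (Y.det / X.det * (v ⬝ᵥ X.mulVec v)) * X.det := by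
        field_simp
    _ ≤ (v ⬝ᵥ Y.mulVec v) * X.det := by
        exact mul_le_mul_of_nonneg_right key hdetX.le
end

section
/- Let A be a stable matrix with steady-state covariance Σ solving Σ = A Σ Aᵀ + I. If Tr(Σ) ≤ κ for some κ ≥ 1, then ρ(A)² ≤ 1 − 1/κ. -/
open Matrix

lemma quad_le_trace {n : ℕ} {S : Matrix (Fin n) (Fin n) ℝ} (hS : S.PosSemidef)
    (w : Fin n → ℝ) : w ⬝ᵥ (S *ᵥ w) ≤ S.trace * (w ⬝ᵥ w) := by
  have hex : ∃ B : Matrix (Fin n) (Fin n) ℝ, S = Bᴴ * B := by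
    open scoped MatrixOrder in
    obtain ⟨X, hX, -, hXS⟩ :=
      CFC.exists_sqrt_of_isSelfAdjoint_of_quasispectrumRestricts hS.isHermitian
        (QuasispectrumRestricts.nnreal_of_nonneg hS.nonneg)
    refine ⟨X, ?_⟩
    rw [← hXS, ← star_eq_conjTranspose, hX.star_eq]
  obtain ⟨B, rfl⟩ := hex
  have hBH : Bᴴ = Bᵀ := by ext i j; simp
  have h1 : w ⬝ᵥ ((Bᴴ * B) *ᵥ w) = ∑ i, (∑ j, B i j * w j) ^ 2 := by
    rw [hBH, ← mulVec_mulVec, dotProduct_mulVec, vecMul_transpose]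
    simp [dotProduct, mulVec, sq]
  have h2 : (Bᴴ * B).trace = ∑ i, ∑ j, B i j ^ 2 := by
    rw [hBH, Finset.sum_comm]
    simp [trace, Matrix.mul_apply, diag, sq]
  rw [h1, h2, Finset.sum_mul]
  apply Finset.sum_le_sum
  intro i _
  calc (∑ j, B i j * w j) ^ 2 ≤ (∑ j, B i j ^ 2) * (∑ j, w j ^ 2) :=
        Finset.sum_mul_sq_le_sq_mul_sq _ _ _
    _ = (∑ j, B i j ^ 2) * (w ⬝ᵥ w) := by simp [dotProduct, sq]

lemma exists_left_eigvec {n : ℕ} (M : Matrix (Fin n) (Fin n) ℂ) {μ : ℂ} (hμ : μ ∈ spectrum ℂ M) :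
    ∃ v : Fin n → ℂ, v ≠ 0 ∧ Mᵀ *ᵥ v = μ • v := by
  have h1 : μ ∈ spectrum ℂ Mᵀ := by
    rw [spectrum.mem_iff] at hμ ⊢
    rw [Matrix.isUnit_iff_isUnit_det] at hμ ⊢
    rwa [show algebraMap ℂ (Matrix (Fin n) (Fin n) ℂ) μ - Mᵀ
        = (algebraMap ℂ (Matrix (Fin n) (Fin n) ℂ) μ - M)ᵀ by
      ext i j
      by_cases h : i = j
      · simp [algebraMap_matrix_apply, h]
      · simp [algebraMap_matrix_apply, if_neg h, if_neg (Ne.symm h)]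
      , det_transpose]
  rw [← AlgEquiv.spectrum_eq (Matrix.toLinAlgEquiv' (R := ℂ) (n := Fin n)),
    ← Module.End.hasEigenvalue_iff_mem_spectrum] at h1
  obtain ⟨v, hv⟩ := h1.exists_hasEigenvector
  refine ⟨v, hv.2, ?_⟩
  have := hv.apply_eq_smul
  rwa [Matrix.toLinAlgEquiv'_apply] at this


/-- Let `A` be stable with steady-state covariance `Σ = AΣAᵀ + I`.
If `Tr(Σ) ≤ κ` for some `κ ≥ 1`, then `ρ(A)² ≤ 1 − 1/κ`. -/
theorem stmt12 {n : ℕ} (A S : Matrix (Fin n) (Fin n) ℝ) (κ : ℝ)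
    (hstab : ∀ μ ∈ spectrum ℂ (A.map (algebraMap ℝ ℂ)), ‖μ‖ < 1)
    (hSpd : S.PosDef) (hS : S = A * S * Aᵀ + 1)
    (hκ : 1 ≤ κ) (htr : S.trace ≤ κ) :
    ((spectralRadius ℂ (A.map (algebraMap ℝ ℂ))).toReal) ^ 2 ≤ 1 - 1 / κ := by
  have hκ0 : (0:ℝ) < κ := lt_of_lt_of_le one_pos hκ
  have hsub : (0:ℝ) ≤ 1 - 1/κ := by
    have : 1/κ ≤ 1 := by rw [div_le_one hκ0]; exact hκ
    linarith
  set M := A.map (algebraMap ℝ ℂ) with hM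
  set Sc := S.map (algebraMap ℝ ℂ) with hScdef
  have hSceq : Sc = M * Sc * Mᵀ + 1 := by
    have h := congrArg (algebraMap ℝ ℂ).mapMatrix hS
    rw [_root_.map_add, _root_.map_mul, _root_.map_mul, _root_.map_one] at h
    simp only [RingHom.mapMatrix_apply] at h
    rw [Matrix.transpose_map] at h
    exact h
  have hr : ∀ μ ∈ spectrum ℂ M, ‖μ‖ ^ 2 ≤ 1 - 1/κ := by
    intro μ hμ
    obtain ⟨v, hv0, hv⟩ := exists_left_eigvec M hμ
    set t : ℝ := ‖μ‖ ^ 2 with ht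
    have htpos : 0 < 1 - t := by
      have h1 : t < 1 := by
        rw [ht]
        exact pow_lt_one₀ (norm_nonneg μ) (hstab μ hμ) two_ne_zero
      linarith
    have hMt : (Mᵀ)ᴴ = M := by
      ext i j
      simp [hM, conjTranspose_apply, Matrix.map_apply]
    have hvM : star v ᵥ* M = star μ • star v := by
      have h := congrArg star hv
      rw [star_mulVec, hMt, star_smul] at h
      exact h
    set q : ℂ := star v ⬝ᵥ (Sc *ᵥ v) with hq
    set sR : ℝ := ∑ i, Complex.normSq (v i) with hsRdef
    have hs : star v ⬝ᵥ v = (sR : ℂ) := by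
      rw [hsRdef, Complex.ofReal_sum]
      refine Finset.sum_congr rfl fun i _ => ?_
      rw [Complex.normSq_eq_conj_mul_self]
      rfl
    have hsR : 0 < sR := by
      obtain ⟨i, hi⟩ := Function.ne_iff.mp hv0
      exact Finset.sum_pos' (fun j _ => Complex.normSq_nonneg _)
        ⟨i, Finset.mem_univ i, by simpa [Complex.normSq_pos] using hi⟩
    have hmu : star μ * μ = (t : ℂ) := by
      rw [Complex.star_def, mul_comm, Complex.mul_conj, ht]
      norm_cast
      rw [Complex.normSq_eq_norm_sq]
    have key : q = (t : ℂ) * q + (sR : ℂ) := by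
      conv_lhs => rw [hq, hSceq]
      rw [add_mulVec, dotProduct_add, one_mulVec, hs, ← mulVec_mulVec, ← mulVec_mulVec,
        hv, mulVec_smul, dotProduct_mulVec, hvM, smul_dotProduct, dotProduct_smul,
        smul_eq_mul, smul_eq_mul, ← mul_assoc, hmu]
    have keyre : (1 - t) * q.re = sR := by
      have h := congrArg Complex.re key
      rw [Complex.add_re, Complex.ofReal_re, Complex.re_ofReal_mul] at h
      linarith
    set x : Fin n → ℝ := fun i => (v i).re with hx
    set y : Fin n → ℝ := fun i => (v i).im with hy
    have hqre : q.re = x ⬝ᵥ (S *ᵥ x) + y ⬝ᵥ (S *ᵥ y) := by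
      rw [hq]
      simp only [dotProduct, mulVec, Pi.star_apply, Complex.re_sum, hScdef,
        Matrix.map_apply, hx, hy]
      rw [← Finset.sum_add_distrib]
      refine Finset.sum_congr rfl fun i _ => ?_
      rw [Finset.mul_sum, Complex.re_sum, Finset.mul_sum, Finset.mul_sum,
        ← Finset.sum_add_distrib]
      refine Finset.sum_congr rfl fun j _ => ?_
      simp only [Complex.star_def, Complex.coe_algebraMap, Complex.mul_re, Complex.mul_im,
        Complex.conj_re, Complex.conj_im, Complex.ofReal_re, Complex.ofReal_im]
      ring
    have hsum : x ⬝ᵥ x + y ⬝ᵥ y = sR := by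
      rw [hsRdef]
      simp only [dotProduct, hx, hy, ← Finset.sum_add_distrib]
      exact Finset.sum_congr rfl fun i _ => by rw [Complex.normSq_apply]
    have hbound : q.re ≤ κ * sR := by
      calc q.re = x ⬝ᵥ (S *ᵥ x) + y ⬝ᵥ (S *ᵥ y) := hqre
        _ ≤ S.trace * (x ⬝ᵥ x) + S.trace * (y ⬝ᵥ y) :=
            add_le_add (quad_le_trace hSpd.posSemidef x) (quad_le_trace hSpd.posSemidef y)
        _ = S.trace * sR := by rw [← mul_add, hsum]
        _ ≤ κ * sR := mul_le_mul_of_nonneg_right htr hsR.le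
    have h1 : sR ≤ (1 - t) * (κ * sR) := by
      calc sR = (1 - t) * q.re := keyre.symm
        _ ≤ (1 - t) * (κ * sR) := mul_le_mul_of_nonneg_left hbound htpos.le
    have h2 : 1 ≤ (1 - t) * κ := by nlinarith
    have h3 : 1/κ ≤ 1 - t := (div_le_iff₀ hκ0).mpr (by linarith)
    linarith
  have hrad : spectralRadius ℂ M ≤ ENNReal.ofReal (Real.sqrt (1 - 1/κ)) := by
    refine iSup₂_le fun μ hμ => ?_
    have hle : ‖μ‖ ≤ Real.sqrt (1 - 1/κ) := by
      rw [show ‖μ‖ = Real.sqrt (‖μ‖ ^ 2) by rw [Real.sqrt_sq (norm_nonneg μ)]]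
      exact Real.sqrt_le_sqrt (hr μ hμ)
    rw [← enorm_eq_nnnorm, ← ofReal_norm]
    exact ENNReal.ofReal_le_ofReal hle
  have htReal : (spectralRadius ℂ M).toReal ≤ Real.sqrt (1 - 1/κ) :=
    ENNReal.toReal_le_of_le_ofReal (Real.sqrt_nonneg _) hrad
  have hfin := pow_le_pow_left₀ ENNReal.toReal_nonneg htReal 2
  rwa [Real.sq_sqrt hsub] at hfin
end
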